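/- arXiv:1510.08029 — 6 statements merged into one kernel-verified Lean document; each statement's English description precedes it below -/
import Mathlib

section
/- Let K be a nonempty closed convex cone in R^n. Then for every v in R^n, ‖Pi_K(v)‖ = sup over θ in K with ‖θ‖ ≤ 1 of v^T θ. -/
open scoped RealInnerProductSpace

/-- For a nonempty closed convex cone `K ⊆ ℝⁿ`,
`‖Π_K v‖ = sup {⟪v, θ⟫ : θ ∈ K, ‖θ‖ ≤ 1}`. -/
theorem stmt3 (n : ℕ) (K : Set (EuclideanSpace ℝ (Fin n))) (hne : K.Nonempty)
    (hcl : IsClosed K) (hconv : Convex ℝ K)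
    (hcone : ∀ (c : ℝ), 0 ≤ c → ∀ x ∈ K, c • x ∈ K)
    (proj : EuclideanSpace ℝ (Fin n) → EuclideanSpace ℝ (Fin n))
    (hproj : ∀ y, proj y ∈ K ∧ ∀ u ∈ K, ‖y - proj y‖ ≤ ‖y - u‖)
    (v : EuclideanSpace ℝ (Fin n)) :
    ‖proj v‖ = sSup {r : ℝ | ∃ θ ∈ K, ‖θ‖ ≤ 1 ∧ r = ⟪v, θ⟫} := by
  obtain ⟨x₀, hx₀⟩ := hne
  have h0K : (0 : EuclideanSpace ℝ (Fin n)) ∈ K := by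
    simpa using hcone 0 le_rfl x₀ hx₀
  set p := proj v with hp
  have hpK : p ∈ K := (hproj v).1
  have hmin : ∀ u ∈ K, ‖v - p‖ ≤ ‖v - u‖ := (hproj v).2
  -- variational inequality
  have hne' : (K : Set _).Nonempty := ⟨p, hpK⟩
  haveI : Nonempty K := ⟨⟨p, hpK⟩⟩
  have hinf : ‖v - p‖ = ⨅ w : K, ‖v - w‖ := by
    refine le_antisymm (le_ciInf fun w => hmin w w.2) ?_
    exact ciInf_le ⟨0, fun r ⟨w, hw⟩ => hw ▸ norm_nonneg _⟩ (⟨p, hpK⟩ : K)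
  have hvar : ∀ w ∈ K, ⟪v - p, w - p⟫ ≤ 0 :=
    (norm_eq_iInf_iff_real_inner_le_zero hconv hpK).mp hinf
  -- ⟪v - p, p⟫ = 0
  have horth : ⟪v - p, p⟫ = 0 := by
    have h2 : ⟪v - p, (2 : ℝ) • p - p⟫ ≤ 0 := hvar _ (hcone 2 (by norm_num) p hpK)
    have h0 : ⟪v - p, (0 : EuclideanSpace ℝ (Fin n)) - p⟫ ≤ 0 := hvar 0 h0K
    have e2 : (2 : ℝ) • p - p = p := by
      rw [two_smul]; abel
    rw [e2] at h2
    rw [zero_sub, inner_neg_right] at h0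
    linarith
  have hneg : ∀ w ∈ K, ⟪v - p, w⟫ ≤ 0 := by
    intro w hw
    have := hvar w hw
    rw [inner_sub_right, horth] at this
    linarith
  have hvp : ⟪v, p⟫ = ‖p‖ ^ 2 := by
    have : ⟪v - p, p⟫ = ⟪v, p⟫ - ⟪p, p⟫ := inner_sub_left _ _ _
    rw [horth] at this
    rw [real_inner_self_eq_norm_sq] at this
    linarith
  -- the sup set
  set S : Set ℝ := {r : ℝ | ∃ θ ∈ K, ‖θ‖ ≤ 1 ∧ r = ⟪v, θ⟫} with hS
  have hub : ∀ r ∈ S, r ≤ ‖p‖ := by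
    rintro r ⟨θ, hθK, hθ1, rfl⟩
    have h1 : ⟪v, θ⟫ = ⟪v - p, θ⟫ + ⟪p, θ⟫ := by
      rw [inner_sub_left]; ring
    have h2 : ⟪p, θ⟫ ≤ ‖p‖ * ‖θ‖ := real_inner_le_norm _ _
    have h3 : ‖p‖ * ‖θ‖ ≤ ‖p‖ * 1 := by
      exact mul_le_mul_of_nonneg_left hθ1 (norm_nonneg _)
    have := hneg θ hθK
    rw [h1]
    nlinarith [norm_nonneg p]
  -- witness
  have hmem : ‖p‖ ∈ S := by
    refine ⟨‖p‖⁻¹ • p, hcone _ (inv_nonneg.mpr (norm_nonneg _)) p hpK, ?_, ?_⟩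
    · rcases eq_or_ne p 0 with h | h
      · simp [h]
      · rw [norm_smul, norm_inv, norm_norm, inv_mul_cancel₀ (norm_ne_zero_iff.mpr h)]
    · rcases eq_or_ne p 0 with h | h
      · simp [h]
      · rw [real_inner_smul_right, hvp]
        field_simp [norm_ne_zero_iff.mpr h]
  exact le_antisymm (le_csSup ⟨‖p‖, hub⟩ hmem) (csSup_le ⟨‖p‖, hmem⟩ hub)
end

section
/- Let K be a nonempty closed convex subset of R^n, μ ∈ R^n, y = μ + ξ for a fixed vector ξ ∈ R^n, and let μ̂ be the projection of y onto K. Then for any u ∈ K, ‖μ̂ − μ‖² − ‖u − μ‖² ≤ (sup over θ in the tangent cone T_{K,u} with ‖θ‖ ≤ 1 of θ^T ξ)², where T_{K,u} is the closure of {t(v − u) : t ≥ 0, v ∈ K}. -/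
open scoped RealInnerProductSpace

set_option maxHeartbeats 1000000

/-- Deterministic bound via the tangent cone: if `μ̂` is the projection of
`y = μ + ξ` onto a nonempty closed convex set `K` and `u ∈ K`, then
`‖μ̂ − μ‖² − ‖u − μ‖² ≤ (sup {⟪θ, ξ⟫ : θ ∈ T_{K,u}, ‖θ‖ ≤ 1})²`,
where `T_{K,u} = closure {t (v − u) : t ≥ 0, v ∈ K}`. -/
theorem stmt7 (n : ℕ) (K : Set (EuclideanSpace ℝ (Fin n))) (hne : K.Nonempty)
    (hcl : IsClosed K) (hconv : Convex ℝ K)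
    (μ ξ : EuclideanSpace ℝ (Fin n)) (y : EuclideanSpace ℝ (Fin n)) (hy : y = μ + ξ)
    (muhat : EuclideanSpace ℝ (Fin n))
    (hproj : muhat ∈ K ∧ ∀ w ∈ K, ‖y - muhat‖ ≤ ‖y - w‖)
    (u : EuclideanSpace ℝ (Fin n)) (hu : u ∈ K)
    (T : Set (EuclideanSpace ℝ (Fin n)))
    (hT : T = closure {w : EuclideanSpace ℝ (Fin n) |
      ∃ t : ℝ, 0 ≤ t ∧ ∃ v ∈ K, w = t • (v - u)}) :
    ‖muhat - μ‖ ^ 2 - ‖u - μ‖ ^ 2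
      ≤ (sSup {r : ℝ | ∃ θ ∈ T, ‖θ‖ ≤ 1 ∧ r = ⟪θ, ξ⟫}) ^ 2 := by
  set S : Set ℝ := {r : ℝ | ∃ θ ∈ T, ‖θ‖ ≤ 1 ∧ r = ⟪θ, ξ⟫} with hS
  set s : ℝ := sSup S with hs
  -- variational inequality
  have : Nonempty K := hne.to_subtype
  have hinf : ‖y - muhat‖ = ⨅ w : K, ‖y - w‖ := by
    apply le_antisymm
    · exact le_ciInf fun w => hproj.2 w w.2
    · have hbb : BddBelow (Set.range fun w : K => ‖y - w‖) := ⟨0, by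
        rintro r ⟨w, rfl⟩; exact norm_nonneg _⟩
      exact ciInf_le hbb ⟨muhat, hproj.1⟩
  have hvar : ∀ w ∈ K, ⟪y - muhat, w - muhat⟫ ≤ 0 :=
    (norm_eq_iInf_iff_real_inner_le_zero hconv hproj.1).1 hinf
  have h1 : ⟪y - muhat, u - muhat⟫ ≤ 0 := hvar u hu
  set e : EuclideanSpace ℝ (Fin n) := muhat - u with he
  -- key inequality: LHS ≤ 2⟪ξ,e⟫ − ‖e‖²
  have key : ‖muhat - μ‖ ^ 2 - ‖u - μ‖ ^ 2 ≤ 2 * ⟪ξ, e⟫ - ‖e‖ ^ 2 := by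
    have expand : ‖muhat - μ‖ ^ 2 = ‖e‖ ^ 2 + 2 * ⟪e, u - μ⟫ + ‖u - μ‖ ^ 2 := by
      have : muhat - μ = e + (u - μ) := by rw [he]; abel
      rw [this, ← real_inner_self_eq_norm_sq, ← real_inner_self_eq_norm_sq,
        ← real_inner_self_eq_norm_sq]
      simp only [inner_add_left, inner_add_right, real_inner_comm (u - μ) e]
      ring
    have h2 : ‖e‖ ^ 2 + ⟪u - μ, e⟫ ≤ ⟪ξ, e⟫ := by
      have hd : y - muhat = ξ - e - (u - μ) := by rw [hy, he]; abel
      have hum : u - muhat = -e := by rw [he]; abel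
      have hinner : ⟪y - muhat, u - muhat⟫ = -⟪ξ, e⟫ + ⟪e, e⟫ + ⟪u - μ, e⟫ := by
        rw [hd, hum, inner_neg_right, inner_sub_left, inner_sub_left]; ring
      rw [hinner] at h1
      have := real_inner_self_eq_norm_sq e
      linarith
    have := real_inner_comm e (u - μ)
    linarith
  have hs_sq : ∀ a : ℝ, 2 * a * s - a ^ 2 ≤ s ^ 2 := fun a => by nlinarith [sq_nonneg (a - s)]
  by_cases hez : e = 0
  · have : ⟪ξ, e⟫ = 0 := by rw [hez]; simp
    have : ‖muhat - μ‖ ^ 2 - ‖u - μ‖ ^ 2 ≤ 0 := by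
      rw [hez] at key; simpa [this] using key
    nlinarith [sq_nonneg s]
  · have hep : 0 < ‖e‖ := norm_pos_iff.2 hez
    set θ : EuclideanSpace ℝ (Fin n) := ‖e‖⁻¹ • e with hθ
    have hθT : θ ∈ T := by
      rw [hT]
      apply subset_closure
      exact ⟨‖e‖⁻¹, inv_nonneg.2 hep.le, muhat, hproj.1, by rw [hθ, he]⟩
    have hθn : ‖θ‖ = 1 := by
      rw [hθ, norm_smul, norm_inv, norm_norm, inv_mul_cancel₀ hep.ne']
    have hmem : ⟪θ, ξ⟫ ∈ S := ⟨θ, hθT, hθn.le, rfl⟩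
    have hbdd : BddAbove S := by
      refine ⟨‖ξ‖, fun r hr => ?_⟩
      obtain ⟨θ', _, hθ'1, rfl⟩ := hr
      have := real_inner_le_norm θ' ξ
      nlinarith [norm_nonneg ξ, norm_nonneg θ']
    have hle : ⟪θ, ξ⟫ ≤ s := le_csSup hbdd hmem
    have hxe : ⟪ξ, e⟫ = ‖e‖ * ⟪θ, ξ⟫ := by
      rw [hθ, real_inner_smul_left, real_inner_comm]
      field_simp
    calc ‖muhat - μ‖ ^ 2 - ‖u - μ‖ ^ 2 ≤ 2 * ⟪ξ, e⟫ - ‖e‖ ^ 2 := key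
      _ ≤ 2 * ‖e‖ * s - ‖e‖ ^ 2 := by rw [hxe]; nlinarith
      _ ≤ s ^ 2 := hs_sq ‖e‖
end

section
/- Let u ∈ S_n↑ be a nondecreasing sequence that is constant on each block of a partition (T_1,...,T_k) of {1,...,n} into consecutive intervals, on which u takes strictly increasing values across blocks. Then the tangent cone of S_n↑ at u equals the product cone S↑_{|T_1|} × ... × S↑_{|T_k|} of nondecreasing sequences on each block. -/
lemma coord_abs_le_norm {n : ℕ} (w : EuclideanSpace ℝ (Fin n)) (i : Fin n) :
    |w i| ≤ ‖w‖ := by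
  rw [EuclideanSpace.norm_eq]
  have h1 : |w i| = Real.sqrt (‖w i‖ ^ 2) := by
    rw [Real.sqrt_sq_eq_abs, abs_norm, Real.norm_eq_abs]
  rw [h1]
  apply Real.sqrt_le_sqrt
  exact Finset.single_le_sum (f := fun j => ‖w j‖ ^ 2) (fun j _ => by positivity) (Finset.mem_univ i)

lemma exists_block {n k : ℕ} (hk : 0 < k) (b : Fin (k + 1) → ℕ)
    (hb0 : b 0 = 0) (hbn : b (Fin.last k) = n) (hb : StrictMono b) (i : Fin n) :
    ∃ j : Fin k, b j.castSucc ≤ (i : ℕ) ∧ (i : ℕ) < b j.succ := by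
  classical
  set T : Finset (Fin k) := Finset.univ.filter (fun ℓ => b ℓ.castSucc ≤ (i : ℕ)) with hT
  have hne : T.Nonempty := by
    refine ⟨⟨0, hk⟩, ?_⟩
    simp only [hT, Finset.mem_filter, Finset.mem_univ, true_and]
    have : (⟨0, hk⟩ : Fin k).castSucc = 0 := rfl
    rw [this, hb0]; exact Nat.zero_le _
  set j := T.max' hne with hj
  have hjT : j ∈ T := T.max'_mem hne
  have hjle : b j.castSucc ≤ (i : ℕ) := by
    simpa [hT] using hjT
  refine ⟨j, hjle, ?_⟩
  by_contra hcon
  push_neg at hcon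
  rcases lt_or_eq_of_le (Nat.succ_le_of_lt j.isLt) with h | h
  · -- j+1 < k
    set j' : Fin k := ⟨(j : ℕ) + 1, h⟩ with hj'
    have hcast : j'.castSucc = j.succ := by
      apply Fin.ext; rfl
    have hj'T : j' ∈ T := by
      simp only [hT, Finset.mem_filter, Finset.mem_univ, true_and]
      rw [hcast]; exact hcon
    have := T.le_max' j' hj'T
    have hlt : j < j' := by
      rw [Fin.lt_def]; simp [hj']
    exact absurd (lt_of_lt_of_le hlt this) (lt_irrefl _)
  · -- j+1 = k
    have hsucc : j.succ = Fin.last k := by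
      apply Fin.ext; simpa using h
    rw [hsucc, hbn] at hcon
    exact absurd i.isLt (not_lt_of_ge hcon)

/-- Tangent cone of the isotonic cone `S_n↑` at a nondecreasing sequence `u` that is
constant on each block of a partition of `{1,...,n}` into `k` consecutive intervals,
with strictly increasing values across blocks: it equals the product cone
`S↑_{|T₁|} × ... × S↑_{|T_k|}` of within-block nondecreasing sequences. -/
theorem stmt8 (n k : ℕ) (hk : 0 < k)
    (S : Set (EuclideanSpace ℝ (Fin n)))
    (hS : S = {w : EuclideanSpace ℝ (Fin n) | ∀ i j : Fin n, i ≤ j → w i ≤ w j})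
    (b : Fin (k + 1) → ℕ) (hb0 : b 0 = 0) (hbn : b (Fin.last k) = n)
    (hb : StrictMono b)
    (u : EuclideanSpace ℝ (Fin n)) (c : Fin k → ℝ) (hc : StrictMono c)
    (hu : ∀ (j : Fin k) (i : Fin n),
      b j.castSucc ≤ (i : ℕ) → (i : ℕ) < b j.succ → u i = c j) :
    closure {w : EuclideanSpace ℝ (Fin n) |
        ∃ t : ℝ, 0 ≤ t ∧ ∃ v ∈ S, w = t • (v - u)}
      = {w : EuclideanSpace ℝ (Fin n) | ∀ (j : Fin k) (i i' : Fin n),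
          b j.castSucc ≤ (i : ℕ) → (i' : ℕ) < b j.succ → i ≤ i' → w i ≤ w i'} := by
  classical
  set A : Set (EuclideanSpace ℝ (Fin n)) :=
    {w | ∃ t : ℝ, 0 ≤ t ∧ ∃ v ∈ S, w = t • (v - u)} with hA
  set B : Set (EuclideanSpace ℝ (Fin n)) :=
    {w | ∀ (j : Fin k) (i i' : Fin n),
      b j.castSucc ≤ (i : ℕ) → (i' : ℕ) < b j.succ → i ≤ i' → w i ≤ w i'} with hB
  have hBclosed : IsClosed B := by
    have : B = ⋂ (j : Fin k), ⋂ (i : Fin n), ⋂ (i' : Fin n),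
        ⋂ (_ : b j.castSucc ≤ (i : ℕ) ∧ (i' : ℕ) < b j.succ ∧ i ≤ i'),
          {w : EuclideanSpace ℝ (Fin n) | w i ≤ w i'} := by
      ext w
      simp only [hB, Set.mem_setOf_eq, Set.mem_iInter]
      constructor
      · intro h j i i' ⟨h1, h2, h3⟩; exact h j i i' h1 h2 h3
      · intro h j i i' h1 h2 h3; exact h j i i' ⟨h1, h2, h3⟩
    rw [this]
    refine isClosed_iInter fun j => isClosed_iInter fun i => isClosed_iInter fun i' =>
      isClosed_iInter fun _ => ?_
    exact isClosed_le (EuclideanSpace.proj i).continuous (EuclideanSpace.proj i').continuous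
  have hAB : A ⊆ B := by
    rintro w ⟨t, ht, v, hv, rfl⟩ j i i' h1 h2 h3
    have hui : u i = c j := hu j i h1 (lt_of_le_of_lt (Nat.cast_le.mpr h3 : (i:ℕ) ≤ i') h2)
    have hui' : u i' = c j := hu j i' (le_trans h1 h3) h2
    have hvle : v i ≤ v i' := by rw [hS] at hv; exact hv i i' h3
    simp only [PiLp.smul_apply, PiLp.sub_apply, smul_eq_mul]
    rw [hui, hui']
    nlinarith
  have hBA : B ⊆ A := by
    intro w hw
    -- choose a large positive t
    have hne : (Finset.univ : Finset (Fin k × Fin k)).Nonempty := by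
      refine ⟨(⟨0, hk⟩, ⟨0, hk⟩), Finset.mem_univ _⟩
    set t : ℝ := 1 + Finset.univ.sup' hne
      (fun p : Fin k × Fin k =>
        if h : c p.1 < c p.2 then (2 * ‖w‖) / (c p.2 - c p.1) else 0) with htdef
    have hsup_nonneg : 0 ≤ Finset.univ.sup' hne
        (fun p : Fin k × Fin k =>
          if h : c p.1 < c p.2 then (2 * ‖w‖) / (c p.2 - c p.1) else 0) := by
      refine le_trans ?_ (Finset.le_sup' _ (Finset.mem_univ (⟨0, hk⟩, ⟨0, hk⟩)))
      simp
    have htpos : 0 < t := by positivity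
    have hkey : ∀ j j' : Fin k, j < j' → 2 * ‖w‖ ≤ t * (c j' - c j) := by
      intro j j' hjj'
      have hcc : c j < c j' := hc hjj'
      have h1 : (2 * ‖w‖) / (c j' - c j) ≤ t := by
        have := Finset.le_sup' (fun p : Fin k × Fin k =>
          if h : c p.1 < c p.2 then (2 * ‖w‖) / (c p.2 - c p.1) else 0)
          (Finset.mem_univ (j, j'))
        simp only [dif_pos hcc] at this
        linarith
      have hgap : 0 < c j' - c j := by linarith
      calc 2 * ‖w‖ = (2 * ‖w‖) / (c j' - c j) * (c j' - c j) := by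
            field_simp
        _ ≤ t * (c j' - c j) := by
            apply mul_le_mul_of_nonneg_right h1 (le_of_lt hgap)
      |>.trans_eq (by ring)
    set v : EuclideanSpace ℝ (Fin n) := u + t⁻¹ • w with hvdef
    have hvS : v ∈ S := by
      rw [hS]
      intro i i' hii'
      obtain ⟨j, hj1, hj2⟩ := exists_block hk b hb0 hbn hb i
      obtain ⟨j', hj'1, hj'2⟩ := exists_block hk b hb0 hbn hb i'
      have hjj' : j ≤ j' := by
        by_contra hcon
        push_neg at hcon
        have hn := Fin.lt_def.mp hcon
        have : j'.succ ≤ j.castSucc := by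
          rw [Fin.le_def]; simp only [Fin.val_succ, Fin.coe_castSucc]; omega
        have := hb.monotone this
        omega
      have hvi : v i = u i + t⁻¹ * w i := by
        rw [hvdef]; simp only [PiLp.add_apply, PiLp.smul_apply, smul_eq_mul]
      have hvi' : v i' = u i' + t⁻¹ * w i' := by
        rw [hvdef]; simp only [PiLp.add_apply, PiLp.smul_apply, smul_eq_mul]
      rcases lt_or_eq_of_le hjj' with h | h
      · -- different blocks
        have hui : u i = c j := hu j i hj1 hj2
        have hui' : u i' = c j' := hu j' i' hj'1 hj'2
        have hb1 : |w i| ≤ ‖w‖ := coord_abs_le_norm w i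
        have hb2 : |w i'| ≤ ‖w‖ := coord_abs_le_norm w i'
        have hK := hkey j j' h
        have hwi : w i ≤ ‖w‖ := le_trans (le_abs_self _) hb1
        have hwi' : -‖w‖ ≤ w i' := by
          have := neg_abs_le (w i'); linarith
        rw [hvi, hvi', hui, hui']
        have h2 : t⁻¹ * w i - t⁻¹ * w i' ≤ t⁻¹ * (2 * ‖w‖) := by
          have : w i - w i' ≤ 2 * ‖w‖ := by linarith
          calc t⁻¹ * w i - t⁻¹ * w i' = t⁻¹ * (w i - w i') := by ring
            _ ≤ t⁻¹ * (2 * ‖w‖) := by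
                apply mul_le_mul_of_nonneg_left this (by positivity)
        have h3 : t⁻¹ * (2 * ‖w‖) ≤ c j' - c j := by
          rw [inv_mul_le_iff₀ htpos]
          linarith [hK]
        linarith
      · -- same block
        subst h
        have hui : u i = c j := hu j i hj1 hj2
        have hui' : u i' = c j := hu j i' hj'1 hj'2
        have hwle : w i ≤ w i' := hw j i i' hj1 hj'2 hii'
        rw [hvi, hvi', hui, hui']
        have : t⁻¹ * w i ≤ t⁻¹ * w i' :=
          mul_le_mul_of_nonneg_left hwle (by positivity)
        linarith
    refine ⟨t, le_of_lt htpos, v, hvS, ?_⟩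
    rw [hvdef]
    rw [add_sub_cancel_left, smul_inv_smul₀ (ne_of_gt htpos)]
  apply le_antisymm
  · exact closure_minimal hAB hBclosed
  · exact le_trans hBA subset_closure
end

section
/- Let K be a nonempty closed convex subset of R^n, u ∈ K, ξ ∈ R^n a fixed vector, y = μ + ξ, and μ̂ the projection of y onto K. Suppose t > 0 satisfies: for Z := sup over v ∈ K with ‖v − u‖ ≤ t of ξ^T(v − u), one has Z ≤ t²/2 + tσ√(2x) for given σ, x > 0. Then ‖μ̂ − μ‖² − ‖u − μ‖² ≤ (t + σ√(2x))². -/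
set_option maxHeartbeats 1000000


open scoped RealInnerProductSpace

/-- Deterministic core of the localized-Gaussian-width sharp oracle inequality:
if `μ̂` is the projection of `y = μ + ξ` onto the nonempty closed convex set `K`,
`u ∈ K`, and the localized supremum `Z = sup {⟪ξ, v − u⟫ : v ∈ K, ‖v − u‖ ≤ t}`
satisfies `Z ≤ t²/2 + tσ√(2x)`, then
`‖μ̂ − μ‖² − ‖u − μ‖² ≤ (t + σ√(2x))²`. -/
theorem stmt16 (n : ℕ) (K : Set (EuclideanSpace ℝ (Fin n))) (hne : K.Nonempty)
    (hcl : IsClosed K) (hconv : Convex ℝ K)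
    (u : EuclideanSpace ℝ (Fin n)) (hu : u ∈ K)
    (μ ξ y : EuclideanSpace ℝ (Fin n)) (hy : y = μ + ξ)
    (muhat : EuclideanSpace ℝ (Fin n))
    (hproj : muhat ∈ K ∧ ∀ w ∈ K, ‖y - muhat‖ ≤ ‖y - w‖)
    (t σ x : ℝ) (ht : 0 < t) (hσ : 0 < σ) (hx : 0 < x)
    (Z : ℝ) (hZdef : Z = sSup {r : ℝ | ∃ v ∈ K, ‖v - u‖ ≤ t ∧ r = ⟪ξ, v - u⟫})
    (hZ : Z ≤ t ^ 2 / 2 + t * σ * Real.sqrt (2 * x)) :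
    ‖muhat - μ‖ ^ 2 - ‖u - μ‖ ^ 2 ≤ (t + σ * Real.sqrt (2 * x)) ^ 2 := by
  obtain ⟨hK, hmin⟩ := hproj
  -- variational inequality
  have hiInf : ‖y - muhat‖ = ⨅ w : K, ‖y - w‖ := by
    haveI : Nonempty K := ⟨⟨muhat, hK⟩⟩
    refine le_antisymm (le_ciInf fun w => hmin w w.2) ?_
    have hbb : BddBelow (Set.range fun w : K => ‖y - (w : EuclideanSpace ℝ (Fin n))‖) := by
      refine ⟨0, ?_⟩
      rintro r ⟨w, rfl⟩
      exact norm_nonneg _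
    exact ciInf_le hbb ⟨muhat, hK⟩
  have hvar : ⟪y - muhat, u - muhat⟫ ≤ 0 :=
    (norm_eq_iInf_iff_real_inner_le_zero hconv hK).mp hiInf u hu
  -- strong convexity / basic inequality
  set I : ℝ := ⟪ξ, muhat - u⟫ with hI
  set b : ℝ := ‖muhat - u‖ with hb
  have hb0 : 0 ≤ b := norm_nonneg _
  have hkey : ‖muhat - μ‖ ^ 2 - ‖u - μ‖ ^ 2 ≤ 2 * I - b ^ 2 := by
    have h1 : ‖muhat - μ‖ ^ 2 - ‖u - μ‖ ^ 2 + b ^ 2 - 2 * I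
        = 2 * ⟪y - muhat, u - muhat⟫ := by
      subst hy
      simp only [hI, hb, ← real_inner_self_eq_norm_sq]
      simp only [inner_sub_left, inner_sub_right, inner_add_left, inner_add_right]
      have c1 := real_inner_comm muhat μ
      have c2 := real_inner_comm u μ
      have c3 := real_inner_comm muhat u
      have c4 := real_inner_comm ξ muhat
      have c5 := real_inner_comm ξ u
      have c6 := real_inner_comm ξ μ
      have c7 := real_inner_comm μ u
      ring_nf
      linarith
    linarith
  set s : ℝ := σ * Real.sqrt (2 * x) with hs
  have hs0 : 0 ≤ s := mul_nonneg hσ.le (Real.sqrt_nonneg _)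
  -- the sup set
  set S : Set ℝ := {r : ℝ | ∃ v ∈ K, ‖v - u‖ ≤ t ∧ r = ⟪ξ, v - u⟫} with hS
  have hbdd : BddAbove S := by
    refine ⟨‖ξ‖ * t, fun r hr => ?_⟩
    obtain ⟨v, _, hv, rfl⟩ := hr
    calc ⟪ξ, v - u⟫ ≤ ‖ξ‖ * ‖v - u‖ := real_inner_le_norm _ _
      _ ≤ ‖ξ‖ * t := by gcongr
  have hZb : Z ≤ t ^ 2 / 2 + t * s := by rw [hs]; linarith
  by_cases hcase : b ≤ t
  · -- muhat itself is in the localized set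
    have hIZ : I ≤ Z := by
      rw [hZdef]
      exact le_csSup hbdd ⟨muhat, hK, hcase, rfl⟩
    nlinarith [sq_nonneg (t - b), sq_nonneg b, sq_nonneg (t + s)]
  · push_neg at hcase
    have hbpos : 0 < b := lt_trans ht hcase
    set α : ℝ := t / b with hα
    have hα0 : 0 ≤ α := div_nonneg ht.le hbpos.le
    have hα1 : α ≤ 1 := by
      rw [hα, div_le_one hbpos]; exact hcase.le
    have hvK : u + α • (muhat - u) ∈ K := by
      have := hconv hu hK (a := 1 - α) (b := α) (by linarith) hα0 (by ring)
      convert this using 1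
      module
    have hnorm : ‖(u + α • (muhat - u)) - u‖ ≤ t := by
      have : (u + α • (muhat - u)) - u = α • (muhat - u) := by abel
      rw [this, norm_smul, Real.norm_eq_abs, abs_of_nonneg hα0, ← hb, hα,
        div_mul_cancel₀ _ hbpos.ne']
    have hαIZ : α * I ≤ Z := by
      rw [hZdef]
      refine le_csSup hbdd ⟨u + α • (muhat - u), hvK, hnorm, ?_⟩
      have : (u + α • (muhat - u)) - u = α • (muhat - u) := by abel
      rw [this, real_inner_smul_right, hI]
    -- so t * I ≤ Z * b, hence I ≤ b * (t/2 + s)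
    have hIb : t * I ≤ Z * b := by
      have := mul_le_mul_of_nonneg_right hαIZ hbpos.le
      rw [hα] at this
      calc t * I = t / b * I * b := by field_simp
        _ ≤ Z * b := this
    have hIb2 : t * I ≤ (t ^ 2 / 2 + t * s) * b := by
      nlinarith
    have hIfin : I ≤ b * (t / 2 + s) := by
      rw [← mul_le_mul_iff_right₀ ht]
      nlinarith
    nlinarith [sq_nonneg (b - (t / 2 + s)), sq_nonneg s, sq_nonneg t]
end

section
/- Let μ = (μ_1,...,μ_n) be a strictly increasing sequence in R^n with n ≥ 3, and let ε = min(1/2, min_{i=2,...,n−1} (μ_{i+1} − μ_i)/(μ_i − μ_{i−1})) > 0. Define design points x_i = −ε^i for i = 1,...,n. Then x_1 < x_2 < ... < x_n and μ belongs to the cone of convex sequences K^C_{x_1,...,x_n}, i.e., the slopes (μ_i − μ_{i−1})/(x_i − x_{i−1}) are nondecreasing in i. -/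
/-- Worst-case geometric design: for a strictly increasing sequence `μ` (`0`-based,
`n ≥ 3`), set `ε = min(1/2, min_{1 ≤ i ≤ n-2} (μ_{i+1} − μ_i)/(μ_i − μ_{i−1}))` and
design points `x_i = −ε^{i+1}`. Then `ε > 0`, the `x_i` are strictly increasing, and
`μ` is a convex sequence for this design: its successive slopes are nondecreasing. -/
theorem stmt17 (n : ℕ) (hn : 3 ≤ n) (μ : ℕ → ℝ)
    (hμ : ∀ i, i + 1 < n → μ i < μ (i + 1))
    (ε : ℝ)
    (hε : ε = min (1 / 2)
      ((Finset.Icc 1 (n - 2)).inf' (by rw [Finset.nonempty_Icc]; omega)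
        fun i => (μ (i + 1) - μ i) / (μ i - μ (i - 1))))
    (x : ℕ → ℝ) (hxdef : ∀ i, x i = -ε ^ (i + 1)) :
    0 < ε ∧ (∀ i, i + 1 < n → x i < x (i + 1))
      ∧ ∀ i, 1 ≤ i → i + 1 < n →
        (μ i - μ (i - 1)) / (x i - x (i - 1))
          ≤ (μ (i + 1) - μ i) / (x (i + 1) - x i) := by
  have hpos : ∀ i ∈ Finset.Icc 1 (n - 2),
      0 < (μ (i + 1) - μ i) / (μ i - μ (i - 1)) := by
    intro i hi
    rw [Finset.mem_Icc] at hi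
    have h1 : μ (i - 1) < μ i := by
      have := hμ (i - 1) (by omega)
      have : μ (i - 1) < μ (i - 1 + 1) := this
      rwa [Nat.sub_add_cancel hi.1] at this
    have h2 : μ i < μ (i + 1) := hμ i (by omega)
    exact div_pos (by linarith) (by linarith)
  have hεpos : 0 < ε := by
    rw [hε]
    apply lt_min (by norm_num)
    rw [Finset.lt_inf'_iff]
    exact fun i hi => hpos i hi
  have hεhalf : ε ≤ 1 / 2 := by rw [hε]; exact min_le_left _ _
  have hdiff : ∀ i : ℕ, 0 < x (i + 1) - x i := by
    intro i
    rw [hxdef, hxdef]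
    have : x (i + 1) - x i = ε ^ (i + 1) * (1 - ε) := by
      rw [hxdef, hxdef]; ring
    rw [hxdef, hxdef] at this
    rw [this]
    exact mul_pos (pow_pos hεpos _) (by linarith)
  refine ⟨hεpos, fun i _ => by linarith [hdiff i], ?_⟩
  intro i hi1 hin
  have hεle : ε ≤ (μ (i + 1) - μ i) / (μ i - μ (i - 1)) := by
    rw [hε]
    exact le_trans (min_le_right _ _)
      (Finset.inf'_le _ (Finset.mem_Icc.mpr ⟨hi1, by omega⟩))
  have h1 : μ (i - 1) < μ i := by
    have := hμ (i - 1) (by omega)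
    rwa [Nat.sub_add_cancel hi1] at this
  have ha : (0:ℝ) < μ i - μ (i - 1) := by linarith
  have hkey : ε * (μ i - μ (i - 1)) ≤ μ (i + 1) - μ i :=
    (le_div_iff₀ ha).mp hεle
  have hd1 : 0 < x i - x (i - 1) := by
    have := hdiff (i - 1)
    rwa [Nat.sub_add_cancel hi1] at this
  have hd2 : 0 < x (i + 1) - x i := hdiff i
  rw [div_le_div_iff₀ hd1 hd2]
  have hx1 : x i - x (i - 1) = ε ^ i * (1 - ε) := by
    rw [hxdef, hxdef]
    have : i - 1 + 1 = i := Nat.sub_add_cancel hi1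
    rw [this]
    cases i with
    | zero => omega
    | succ k => ring
  have hx2 : x (i + 1) - x i = ε ^ (i + 1) * (1 - ε) := by
    rw [hxdef, hxdef]; ring
  rw [hx1, hx2, pow_succ]
  have hεi : 0 < ε ^ i := pow_pos hεpos i
  nlinarith [mul_le_mul_of_nonneg_left hkey (le_of_lt (mul_pos hεi (by linarith : (0:ℝ) < 1 - ε)))]
end

section
/- Let U = ∪_{m=1}^n K_m be the (non-convex) set of unimodal sequences in R^n, μ ∈ R^n, ξ ∈ R^n fixed, y = μ + ξ, and μ̂ any minimizer over U of ‖y − ·‖². Then for every u ∈ U, ‖μ̂ − μ‖ ≤ ‖u − μ‖ + 2 Y_u, where Y_u := sup over v in ∪_{m=1}^n T_{m,u} with ‖v‖ ≤ 1 of ξ^T v, and T_{m,u} is the tangent cone of K_m at u. -/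
open scoped RealInnerProductSpace

/-- Deterministic oracle inequality for unimodal least squares: let
`U = ⋃_m K_m` be the set of unimodal sequences, `y = μ + ξ`, and `μ̂` a minimizer
over `U` of `‖y − ·‖`. Then for every `u ∈ U`,
`‖μ̂ − μ‖ ≤ ‖u − μ‖ + 2 Y_u`, where
`Y_u = sup {⟪ξ, v⟫ : v ∈ ⋃_m T_{m,u}, ‖v‖ ≤ 1}` and `T_{m,u}` is the tangent cone
of `K_m` at `u`. -/
theorem stmt19 (n : ℕ)
    (Km : Fin n → Set (EuclideanSpace ℝ (Fin n)))
    (hKm : ∀ m, Km m = {w : EuclideanSpace ℝ (Fin n) |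
      (∀ i i' : Fin n, i ≤ i' → i' ≤ m → w i' ≤ w i)
        ∧ ∀ i i' : Fin n, m ≤ i → i ≤ i' → w i ≤ w i'})
    (U : Set (EuclideanSpace ℝ (Fin n))) (hU : U = ⋃ m, Km m)
    (μ ξ y : EuclideanSpace ℝ (Fin n)) (hy : y = μ + ξ)
    (muhat : EuclideanSpace ℝ (Fin n))
    (hmuhat : muhat ∈ U ∧ ∀ w ∈ U, ‖y - muhat‖ ≤ ‖y - w‖)
    (T : Fin n → EuclideanSpace ℝ (Fin n) → Set (EuclideanSpace ℝ (Fin n)))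
    (hT : ∀ m u, T m u = closure {w : EuclideanSpace ℝ (Fin n) |
      ∃ t : ℝ, 0 ≤ t ∧ ∃ v ∈ Km m, w = t • (v - u)})
    (Y : EuclideanSpace ℝ (Fin n) → ℝ)
    (hY : ∀ u, Y u = sSup {r : ℝ |
      ∃ m : Fin n, ∃ v ∈ T m u, ‖v‖ ≤ 1 ∧ r = ⟪ξ, v⟫}) :
    ∀ u ∈ U, ‖muhat - μ‖ ≤ ‖u - μ‖ + 2 * Y u := by
  intro u hu
  obtain ⟨hmU, hmin⟩ := hmuhat
  have hmU' := hmU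
  rw [hU] at hmU'
  obtain ⟨_, ⟨m, rfl⟩, hm⟩ := hmU'
  -- the sup set is bounded above by ‖ξ‖
  have hbdd : BddAbove {r : ℝ |
      ∃ m : Fin n, ∃ v ∈ T m u, ‖v‖ ≤ 1 ∧ r = ⟪ξ, v⟫} := by
    refine ⟨‖ξ‖, ?_⟩
    rintro r ⟨m', v, hv, hv1, rfl⟩
    calc ⟪ξ, v⟫ ≤ ‖ξ‖ * ‖v‖ := real_inner_le_norm _ _
      _ ≤ ‖ξ‖ * 1 := by nlinarith [norm_nonneg ξ]
      _ = ‖ξ‖ := mul_one _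
  -- 0 lies in K_m
  have h0K : (0 : EuclideanSpace ℝ (Fin n)) ∈ Km m := by
    rw [hKm]
    constructor <;> intro i i' _ _ <;> simp
  set a := ‖muhat - μ‖ with ha
  set b := ‖u - μ‖ with hb
  set c := a + b with hc
  have hc0 : 0 ≤ c := by positivity
  rcases eq_or_lt_of_le hc0 with hc0' | hcpos
  · -- degenerate case : muhat = μ and u = μ, need only Y u ≥ 0
    have ha0 : a = 0 := by
      have := norm_nonneg (muhat - μ); have := norm_nonneg (u - μ); linarith [hc0'.symm]
    have hY0 : (0 : ℝ) ≤ Y u := by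
      rw [hY]
      refine le_csSup hbdd ?_
      refine ⟨m, 0, ?_, by simp, by simp⟩
      rw [hT]
      exact subset_closure ⟨0, le_refl 0, 0, h0K, by simp⟩
    linarith
  · -- main case
    have hcne : c ≠ 0 := ne_of_gt hcpos
    -- basic inequality from minimality
    have hle : ‖y - muhat‖ ≤ ‖y - u‖ := hmin u hu
    have hsq : ‖y - muhat‖ ^ 2 ≤ ‖y - u‖ ^ 2 := by
      have := mul_self_le_mul_self (norm_nonneg _) hle
      nlinarith
    have key : a ^ 2 - b ^ 2 ≤ 2 * ⟪ξ, muhat - u⟫ := by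
      have e1 : y - muhat = (μ - muhat) + ξ := by rw [hy]; abel
      have e2 : y - u = (μ - u) + ξ := by rw [hy]; abel
      rw [e1, e2, norm_add_sq_real, norm_add_sq_real] at hsq
      have n1 : ‖μ - muhat‖ = a := by rw [ha, norm_sub_rev]
      have n2 : ‖μ - u‖ = b := by rw [hb, norm_sub_rev]
      rw [n1, n2] at hsq
      have i1 : ⟪μ - muhat, ξ⟫ = ⟪μ, ξ⟫ - ⟪muhat, ξ⟫ := inner_sub_left _ _ _
      have i2 : ⟪μ - u, ξ⟫ = ⟪μ, ξ⟫ - ⟪u, ξ⟫ := inner_sub_left _ _ _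
      have i3 : ⟪ξ, muhat - u⟫ = ⟪muhat, ξ⟫ - ⟪u, ξ⟫ := by
        rw [real_inner_comm, inner_sub_left]
      linarith
    -- the rescaled direction lies in the tangent cone
    set v : EuclideanSpace ℝ (Fin n) := c⁻¹ • (muhat - u) with hv
    have hvT : v ∈ T m u := by
      rw [hT]
      exact subset_closure ⟨c⁻¹, by positivity, muhat, hm, rfl⟩
    have hvnorm : ‖v‖ ≤ 1 := by
      rw [hv, norm_smul, norm_inv, Real.norm_of_nonneg hc0]
      have htri : ‖muhat - u‖ ≤ c := by
        calc ‖muhat - u‖ ≤ ‖muhat - μ‖ + ‖μ - u‖ := norm_sub_le_norm_sub_add_norm_sub _ _ _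
          _ = a + b := by rw [ha, hb, norm_sub_rev μ u]
      calc c⁻¹ * ‖muhat - u‖ ≤ c⁻¹ * c := by
            exact mul_le_mul_of_nonneg_left htri (by positivity)
        _ = 1 := inv_mul_cancel₀ hcne
    have hrY : ⟪ξ, v⟫ ≤ Y u := by
      rw [hY]
      exact le_csSup hbdd ⟨m, v, hvT, hvnorm, rfl⟩
    have hinner : ⟪ξ, muhat - u⟫ = c * ⟪ξ, v⟫ := by
      rw [hv, real_inner_smul_right]
      field_simp
    rw [hinner] at key
    -- conclude: (a - b) * c = a^2 - b^2 ≤ 2 c ⟪ξ,v⟫ ≤ 2 c Y u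
    have h1 : c * ⟪ξ, v⟫ ≤ c * Y u := mul_le_mul_of_nonneg_left hrY hc0
    have h3 : (a - b) * c ≤ 2 * Y u * c := by
      calc (a - b) * c = a ^ 2 - b ^ 2 := by rw [hc]; ring
        _ ≤ 2 * (c * ⟪ξ, v⟫) := key
        _ ≤ 2 * (c * Y u) := by linarith
        _ = 2 * Y u * c := by ring
    have := le_of_mul_le_mul_right h3 hcpos
    linarith
end
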